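/- For every $n \in \omega$ and $i < n$, $t_n(i) < n - i$, where $t_n = \psi(n)0^{n-|\psi(n)|}$ and $\psi$ is the bijection $\omega \to \omega^{<\omega}$ induced by the prime coding. -/

import Mathlib

/-- The prime coding of finite sequences. -/
noncomputable def primeCode (s : List ℕ) : ℕ :=
  ∏ j ∈ Finset.range s.length, (Nat.nth Nat.Prime j) ^ (s.getD j 0 + 1)

/-- `ψ = (i ∘ I)⁻¹ : ω → ω^{<ω}` where `i` is the increasing bijection from the range of
the prime coding `I` onto `ω`. -/
noncomputable def psi (n : ℕ) : List ℕ :=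
  Function.invFun primeCode (Nat.nth (fun k => k ∈ Set.range primeCode) n)

/-- `t_n := ψ(n)0^{n-|ψ(n)|}`, a sequence of length `n`. -/
noncomputable def tseq (n : ℕ) : List ℕ :=
  psi n ++ List.replicate (n - (psi n).length) 0

private lemma pC_pos (t : List ℕ) : 0 < primeCode t :=
  Finset.prod_pos fun j _ => pow_pos (Nat.prime_nth_prime j).pos _

private lemma nth_prime_inj : Function.Injective (Nat.nth Nat.Prime) :=
  Nat.nth_injective Nat.infinite_setOf_prime

private lemma dvd_pC {t : List ℕ} {m : ℕ} (h : m < t.length) :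
    Nat.nth Nat.Prime m ∣ primeCode t :=
  dvd_trans (dvd_pow_self _ (Nat.succ_ne_zero _))
    (Finset.dvd_prod_of_mem _ (Finset.mem_range.2 h))

private lemma not_dvd_pC {t : List ℕ} {m : ℕ} (h : t.length ≤ m) :
    ¬ Nat.nth Nat.Prime m ∣ primeCode t := by
  intro hd
  rw [primeCode, Prime.dvd_finset_prod_iff (Nat.prime_nth_prime m).prime] at hd
  obtain ⟨k, hk, hdk⟩ := hd
  have h2 := (Nat.prime_nth_prime m).dvd_of_dvd_pow hdk
  rw [Nat.prime_dvd_prime_iff_eq (Nat.prime_nth_prime m) (Nat.prime_nth_prime k)] at h2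
  have := nth_prime_inj h2
  rw [Finset.mem_range] at hk
  omega

private lemma take_dvd (t : List ℕ) (j : ℕ) : primeCode (t.take j) ∣ primeCode t := by
  unfold primeCode
  have h1 : ∀ k ∈ Finset.range (t.take j).length,
      Nat.nth Nat.Prime k ^ ((t.take j).getD k 0 + 1)
        = Nat.nth Nat.Prime k ^ (t.getD k 0 + 1) := by
    intro k hk
    rw [Finset.mem_range, List.length_take] at hk
    rw [List.getD_eq_getElem?_getD, List.getD_eq_getElem?_getD,
      List.getElem?_take_of_lt (by omega)]
  rw [Finset.prod_congr rfl h1]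
  exact Finset.prod_dvd_prod_of_subset _ _ _
    (Finset.range_subset_range.2 (by simp [List.length_take]))

private lemma set_code {s : List ℕ} {i : ℕ} (hi : i < s.length) (v : ℕ) :
    primeCode (s.set i v) = Nat.nth Nat.Prime i ^ (v + 1) *
      ∏ k ∈ (Finset.range s.length).erase i, Nat.nth Nat.Prime k ^ (s.getD k 0 + 1) := by
  unfold primeCode
  rw [List.length_set, ← Finset.mul_prod_erase _ _ (Finset.mem_range.2 hi)]
  congr 1
  · rw [List.getD_eq_getElem?_getD, List.getElem?_set_eq_of_lt _ hi]; rfl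
  · refine Finset.prod_congr rfl fun k hk => ?_
    rw [Finset.mem_erase] at hk
    rw [List.getD_eq_getElem?_getD, List.getD_eq_getElem?_getD, List.getElem?_set_ne hk.1.symm]

private lemma self_code {s : List ℕ} {i : ℕ} (hi : i < s.length) :
    primeCode s = Nat.nth Nat.Prime i ^ (s.getD i 0 + 1) *
      ∏ k ∈ (Finset.range s.length).erase i, Nat.nth Nat.Prime k ^ (s.getD k 0 + 1) :=
  (Finset.mul_prod_erase _ _ (Finset.mem_range.2 hi)).symm

/-- Lemma 4.5.(a): for all `n` and `i < n`, `t_n(i) < n - i`. -/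
theorem tseq_lt (n i : ℕ) (hi : i < n) : (tseq n).getD i 0 < n - i := by
  classical
  set s := psi n with hs
  have hval : (tseq n).getD i 0 = if i < s.length then s.getD i 0 else 0 := by
    rw [tseq, ← hs]
    split
    · rw [List.getD_eq_getElem?_getD, List.getElem?_append_left ‹_›,
        ← List.getD_eq_getElem?_getD]
    · rw [List.getD_eq_getElem?_getD, List.getElem?_append_right (by omega),
        List.getElem?_replicate]
      split <;> rfl
  by_cases hil : i < s.length
  swap
  · rw [hval, if_neg hil]; omega
  rw [hval, if_pos hil]
  -- the predicate
  set p : ℕ → Prop := fun k => k ∈ Set.range primeCode with hp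
  have hinf : (setOf p).Infinite := by
    have hinj : Function.Injective (fun k : ℕ => primeCode [k]) := by
      intro a b hab
      dsimp only at hab
      have h2 : primeCode [a] = Nat.nth Nat.Prime 0 ^ (a + 1) := by
        simp [primeCode]
      have h3 : primeCode [b] = Nat.nth Nat.Prime 0 ^ (b + 1) := by
        simp [primeCode]
      rw [h2, h3] at hab
      have := Nat.pow_right_injective (Nat.prime_nth_prime 0).two_le hab
      omega
    exact Set.infinite_of_injective_forall_mem hinj (fun k => ⟨[k], rfl⟩)
  have hmem : p (Nat.nth p n) := Nat.nth_mem_of_infinite hinf n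
  obtain ⟨a, ha⟩ := hmem
  have hcode : primeCode s = Nat.nth p n := by
    rw [hs, psi]
    exact Function.invFun_eq ⟨a, ha⟩
  have hcount : Nat.count p (Nat.nth p n) = n := Nat.count_nth_of_infinite hinf n
  set m := primeCode s with hm
  set si := s.getD i 0 with hsi
  set C := ∏ k ∈ (Finset.range s.length).erase i, Nat.nth Nat.Prime k ^ (s.getD k 0 + 1)
    with hC
  have hCpos : 0 < C :=
    Finset.prod_pos fun j _ => pow_pos (Nat.prime_nth_prime j).pos _
  -- prefix codes strict mono
  have hmono : ∀ j j' : ℕ, j < j' → j' ≤ s.length →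
      primeCode (s.take j) < primeCode (s.take j') := by
    intro j j' hjj' hj'
    have htt : s.take j = (s.take j').take j := by
      rw [List.take_take, min_eq_left hjj'.le]
    have hd : primeCode (s.take j) ∣ primeCode (s.take j') := htt ▸ take_dvd _ _
    refine Nat.lt_of_le_of_ne (Nat.le_of_dvd (pC_pos _) hd) fun he => ?_
    have h1 : Nat.nth Nat.Prime j ∣ primeCode (s.take j') :=
      dvd_pC (by rw [List.length_take]; omega)
    have h2 : ¬ Nat.nth Nat.Prime j ∣ primeCode (s.take j) :=
      not_dvd_pC (by rw [List.length_take]; omega)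
    exact h2 (he ▸ h1)
  have htake_lt : ∀ j ≤ i, primeCode (s.take j) < m := by
    intro j hj
    have := hmono j s.length (by omega) le_rfl
    rwa [List.take_length] at this
  have hset_lt : ∀ v < si, primeCode (s.set i v) < m := by
    intro v hv
    rw [set_code hil, hm, self_code hil, ← hsi, ← hC]
    exact (Nat.mul_lt_mul_right hCpos).2
      (Nat.pow_lt_pow_right (Nat.prime_nth_prime i).one_lt (by omega))
  -- the witness finset
  set T : Finset ℕ :=
    ((Finset.range (i + 1)).image fun j => primeCode (s.take j)) ∪
    ((Finset.range si).image fun v => primeCode (s.set i v)) with hT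
  have hdisj : Disjoint ((Finset.range (i + 1)).image fun j => primeCode (s.take j))
      ((Finset.range si).image fun v => primeCode (s.set i v)) := by
    rw [Finset.disjoint_left]
    rintro x hx1 hx2
    obtain ⟨j, hj, rfl⟩ := Finset.mem_image.1 hx1
    obtain ⟨v, hv, he⟩ := Finset.mem_image.1 hx2
    rw [Finset.mem_range] at hj hv
    have h1 : Nat.nth Nat.Prime (s.length - 1) ∣ primeCode (s.set i v) :=
      dvd_pC (by rw [List.length_set]; omega)
    have h2 : ¬ Nat.nth Nat.Prime (s.length - 1) ∣ primeCode (s.take j) :=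
      not_dvd_pC (by rw [List.length_take]; omega)
    exact h2 (he ▸ h1)
  have hcard : T.card = (i + 1) + si := by
    rw [hT, Finset.card_union_of_disjoint hdisj, Finset.card_image_of_injOn,
      Finset.card_image_of_injOn, Finset.card_range, Finset.card_range]
    · intro a ha b hb hab
      rw [Finset.coe_range, Set.mem_Iio] at ha hb
      dsimp only at hab
      by_contra hne
      have key : ∀ u w, u < w → primeCode (s.set i u) < primeCode (s.set i w) := by
        intro u w huw
        rw [set_code hil, set_code hil, ← hC]
        exact (Nat.mul_lt_mul_right hCpos).2
          (Nat.pow_lt_pow_right (Nat.prime_nth_prime i).one_lt (by omega))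
      rcases Nat.lt_or_ge a b with h | h
      · have := key a b h; omega
      · have := key b a (by omega); omega
    · intro a ha b hb hab
      rw [Finset.coe_range, Set.mem_Iio] at ha hb
      dsimp only at hab
      by_contra hne
      rcases Nat.lt_or_ge a b with h | h
      · have := hmono a b h (by omega); omega
      · have := hmono b a (by omega) (by omega); omega
  have hsub : T ⊆ (Finset.range m).filter p := by
    intro x hx
    rw [hT, Finset.mem_union] at hx
    rw [Finset.mem_filter, Finset.mem_range]
    rcases hx with hx | hx
    · obtain ⟨j, hj, rfl⟩ := Finset.mem_image.1 hx
      rw [Finset.mem_range] at hj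
      exact ⟨htake_lt j (by omega), ⟨_, rfl⟩⟩
    · obtain ⟨v, hv, rfl⟩ := Finset.mem_image.1 hx
      rw [Finset.mem_range] at hv
      exact ⟨hset_lt v hv, ⟨_, rfl⟩⟩
  have hle : (i + 1) + si ≤ n := by
    have h1 := Finset.card_le_card hsub
    rw [hcard] at h1
    rw [← hcount, Nat.count_eq_card_filter_range, ← hcode]
    simpa using h1
  omega
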